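/- For two nonnegative bounded service rates r₁, r₂ with rⱼ = rⱼ(z) depending on a random state z, and θ₁, θ₂ > 0, the region C_E = {(C₁,C₂) ∈ ℝ≥0² : Cⱼ ≤ −(1/(θⱼTB))log E[e^{−θⱼTB rⱼ(z)}]} obtained as the union over all admissible (measurable, jointly constrained) rate pairs (r₁,r₂) is convex, provided the set of admissible rate pairs is closed under time sharing (i.e., for admissible (r₁,r₂) and (r₁′,r₂′) and λ∈[0,1], the pair (λr₁+(1−λ)r₁′, λr₂+(1−λ)r₂′) is admissible). -/

import Mathlib

open MeasureTheory

lemma exp_neg_integrable {Ω : Type*} [MeasureSpace Ω]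
    [IsProbabilityMeasure (volume : Measure Ω)] {c : ℝ} (hc : 0 < c)
    {r : Ω → ℝ} (hm : Measurable r) (h0 : ∀ ω, 0 ≤ r ω) :
    Integrable (fun ω => Real.exp (-c * r ω)) := by
  rw [← memLp_one_iff_integrable]
  refine MemLp.of_bound ((hm.const_mul (-c)).exp.aestronglyMeasurable) 1 ?_
  filter_upwards with ω
  rw [Real.norm_of_nonneg (Real.exp_nonneg _)]
  exact Real.exp_le_one_iff.2 (by nlinarith [h0 ω])

lemma exp_neg_integral_pos {Ω : Type*} [MeasureSpace Ω]
    [IsProbabilityMeasure (volume : Measure Ω)] {c : ℝ} (hc : 0 < c)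
    {r : Ω → ℝ} (hm : Measurable r) (h0 : ∀ ω, 0 ≤ r ω) {M : ℝ}
    (hM : ∀ ω, r ω ≤ M) :
    0 < ∫ ω, Real.exp (-c * r ω) := by
  calc (0:ℝ) < Real.exp (-c * M) := Real.exp_pos _
    _ = ∫ (_ : Ω), Real.exp (-c * M) := by simp
    _ ≤ ∫ ω, Real.exp (-c * r ω) := by
        refine integral_mono (integrable_const _) (exp_neg_integrable hc hm h0) ?_
        intro ω
        exact Real.exp_le_exp.2 (by nlinarith [hM ω])

/-- Hölder step: the log moment generating functional is convex in the rate. -/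
lemma log_integral_exp_le {Ω : Type*} [MeasureSpace Ω]
    [IsProbabilityMeasure (volume : Measure Ω)] {c : ℝ} (hc : 0 < c)
    {r r' : Ω → ℝ} (hm : Measurable r) (hm' : Measurable r')
    (h0 : ∀ ω, 0 ≤ r ω) (h0' : ∀ ω, 0 ≤ r' ω)
    {M : ℝ} (hM : ∀ ω, r ω ≤ M) (hM' : ∀ ω, r' ω ≤ M)
    {lam : ℝ} (hl0 : 0 < lam) (hl1 : lam < 1) :
    Real.log (∫ ω, Real.exp (-c * (lam * r ω + (1 - lam) * r' ω)))
      ≤ lam * Real.log (∫ ω, Real.exp (-c * r ω))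
        + (1 - lam) * Real.log (∫ ω, Real.exp (-c * r' ω)) := by
  set I : ℝ := ∫ ω, Real.exp (-c * r ω) with hI
  set I' : ℝ := ∫ ω, Real.exp (-c * r' ω) with hI'
  have hIpos : 0 < I := exp_neg_integral_pos hc hm h0 hM
  have hI'pos : 0 < I' := exp_neg_integral_pos hc hm' h0' hM'
  have hpq : (1 / lam).HolderConjugate (1 / (1 - lam)) := by
    rw [Real.holderConjugate_iff]
    constructor
    · rw [lt_div_iff₀ hl0]; linarith
    · simp only [one_div, inv_inv]; ring
  have hmemf : MemLp (fun ω => Real.exp (-c * r ω) ^ lam)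
      (ENNReal.ofReal (1 / lam)) (volume : Measure Ω) := by
    refine MemLp.of_bound (((Real.continuous_rpow_const hl0.le).measurable.comp
      ((hm.const_mul (-c)).exp)).aestronglyMeasurable) 1 ?_
    filter_upwards with ω
    rw [Real.norm_of_nonneg (Real.rpow_nonneg (Real.exp_nonneg _) _)]
    exact Real.rpow_le_one (Real.exp_nonneg _)
      (Real.exp_le_one_iff.2 (by nlinarith [h0 ω])) hl0.le
  have hmemg : MemLp (fun ω => Real.exp (-c * r' ω) ^ (1 - lam))
      (ENNReal.ofReal (1 / (1 - lam))) (volume : Measure Ω) := by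
    refine MemLp.of_bound (((Real.continuous_rpow_const (by linarith : (0:ℝ) ≤ 1 - lam)).measurable.comp
      ((hm'.const_mul (-c)).exp)).aestronglyMeasurable) 1 ?_
    filter_upwards with ω
    rw [Real.norm_of_nonneg (Real.rpow_nonneg (Real.exp_nonneg _) _)]
    exact Real.rpow_le_one (Real.exp_nonneg _)
      (Real.exp_le_one_iff.2 (by nlinarith [h0' ω])) (by linarith)
  have hhold := integral_mul_le_Lp_mul_Lq_of_nonneg hpq
    (Filter.Eventually.of_forall fun ω => Real.rpow_nonneg (Real.exp_nonneg _) _)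
    (Filter.Eventually.of_forall fun ω => Real.rpow_nonneg (Real.exp_nonneg _) _)
    hmemf hmemg
  have hleft : (∫ ω, Real.exp (-c * r ω) ^ lam * Real.exp (-c * r' ω) ^ (1 - lam))
      = ∫ ω, Real.exp (-c * (lam * r ω + (1 - lam) * r' ω)) := by
    refine integral_congr_ae (Filter.Eventually.of_forall fun ω => ?_)
    dsimp only
    rw [← Real.exp_mul, ← Real.exp_mul, ← Real.exp_add]
    ring_nf
  have hrf : (∫ ω, (Real.exp (-c * r ω) ^ lam) ^ (1 / lam)) = I := by
    rw [hI]
    refine integral_congr_ae (Filter.Eventually.of_forall fun ω => ?_)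
    dsimp only
    rw [← Real.rpow_mul (Real.exp_nonneg _), mul_one_div_cancel hl0.ne', Real.rpow_one]
  have hrg : (∫ ω, (Real.exp (-c * r' ω) ^ (1 - lam)) ^ (1 / (1 - lam))) = I' := by
    rw [hI']
    refine integral_congr_ae (Filter.Eventually.of_forall fun ω => ?_)
    dsimp only
    rw [← Real.rpow_mul (Real.exp_nonneg _), mul_one_div_cancel (by linarith : (1:ℝ) - lam ≠ 0),
      Real.rpow_one]
  rw [hleft, hrf, hrg, one_div_one_div, one_div_one_div] at hhold
  have hIcpos : 0 < ∫ ω, Real.exp (-c * (lam * r ω + (1 - lam) * r' ω)) := by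
    refine exp_neg_integral_pos hc ((hm.const_mul lam).add (hm'.const_mul (1 - lam)))
      (fun ω => by nlinarith [h0 ω, h0' ω]) (M := M) (fun ω => by nlinarith [hM ω, hM' ω])
  calc Real.log (∫ ω, Real.exp (-c * (lam * r ω + (1 - lam) * r' ω)))
      ≤ Real.log (I ^ lam * I' ^ (1 - lam)) := Real.log_le_log hIcpos hhold
    _ = lam * Real.log I + (1 - lam) * Real.log I' := by
        rw [Real.log_mul (Real.rpow_pos_of_pos hIpos _).ne' (Real.rpow_pos_of_pos hI'pos _).ne',
          Real.log_rpow hIpos, Real.log_rpow hI'pos]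

/-- The effective capacity region of a two-user system,
`C_E = ⋃_{(r₁,r₂) admissible} {(C₁,C₂) ≥ 0 : Cⱼ ≤ −(1/(θⱼTB))·log E[e^{−θⱼTB rⱼ}]}`,
is convex provided the set of admissible rate pairs is closed under time
sharing. -/
theorem effective_capacity_region_convex
    {Ω : Type*} [MeasureSpace Ω] [IsProbabilityMeasure (volume : Measure Ω)]
    (A : Set ((Ω → ℝ) × (Ω → ℝ)))
    (hA : ∀ rp ∈ A, Measurable rp.1 ∧ Measurable rp.2
      ∧ (∀ ω, 0 ≤ rp.1 ω) ∧ (∀ ω, 0 ≤ rp.2 ω)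
      ∧ ∃ M : ℝ, ∀ ω, rp.1 ω ≤ M ∧ rp.2 ω ≤ M)
    (htimeshare : ∀ rp ∈ A, ∀ rq ∈ A, ∀ lam ∈ Set.Icc (0 : ℝ) 1,
      ((fun ω => lam * rp.1 ω + (1 - lam) * rq.1 ω),
       (fun ω => lam * rp.2 ω + (1 - lam) * rq.2 ω)) ∈ A)
    (θ₁ θ₂ T B : ℝ) (hθ₁ : 0 < θ₁) (hθ₂ : 0 < θ₂) (hT : 0 < T) (hB : 0 < B)
    (EC : ℝ → (Ω → ℝ) → ℝ)
    (hEC : EC = fun c r => -(1 / c) * Real.log (∫ ω, Real.exp (-c * r ω)))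
    (Region : Set (ℝ × ℝ))
    (hRegion : Region = {C : ℝ × ℝ | 0 ≤ C.1 ∧ 0 ≤ C.2 ∧
      ∃ rp ∈ A, C.1 ≤ EC (θ₁ * T * B) rp.1 ∧ C.2 ≤ EC (θ₂ * T * B) rp.2}) :
    Convex ℝ Region := by
  subst hRegion
  intro x hx y hy a b ha hb hab
  rcases hx with ⟨hx1, hx2, rp, hrpA, hx3, hx4⟩
  rcases hy with ⟨hy1, hy2, rq, hrqA, hy3, hy4⟩
  rcases eq_or_lt_of_le ha with ha0 | ha0
  · have hb1 : b = 1 := by linarith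
    simp only [← ha0, hb1, Set.mem_setOf_eq, zero_smul, one_smul, zero_add]
    exact ⟨hy1, hy2, rq, hrqA, hy3, hy4⟩
  rcases eq_or_lt_of_le hb with hb0 | hb0
  · have ha1 : a = 1 := by linarith
    simp only [← hb0, ha1, Set.mem_setOf_eq, one_smul, zero_smul, add_zero]
    exact ⟨hx1, hx2, rp, hrpA, hx3, hx4⟩
  have ha1 : a < 1 := by linarith
  obtain ⟨hm1, hm2, h01, h02, M, hMb⟩ := hA rp hrpA
  obtain ⟨hm1', hm2', h01', h02', M', hMb'⟩ := hA rq hrqA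
  set N := max M M' with hN
  have hM1 : ∀ ω, rp.1 ω ≤ N := fun ω => le_max_of_le_left (hMb ω).1
  have hM2 : ∀ ω, rp.2 ω ≤ N := fun ω => le_max_of_le_left (hMb ω).2
  have hM1' : ∀ ω, rq.1 ω ≤ N := fun ω => le_max_of_le_right (hMb' ω).1
  have hM2' : ∀ ω, rq.2 ω ≤ N := fun ω => le_max_of_le_right (hMb' ω).2
  have hc₁ : 0 < θ₁ * T * B := by positivity
  have hc₂ : 0 < θ₂ * T * B := by positivity
  refine ⟨by dsimp; positivity, by dsimp; positivity, ?_⟩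
  refine ⟨_, htimeshare rp hrpA rq hrqA a ⟨ha, ha1.le⟩, ?_, ?_⟩
  · have hkey := log_integral_exp_le hc₁ hm1 hm1' h01 h01' hM1 hM1' ha0 ha1
    have : a * EC (θ₁ * T * B) rp.1 + (1 - a) * EC (θ₁ * T * B) rq.1
        ≤ EC (θ₁ * T * B) fun ω => a * rp.1 ω + (1 - a) * rq.1 ω := by
      simp only [hEC]
      have h1c : 0 ≤ 1 / (θ₁ * T * B) := by positivity
      nlinarith [hkey]
    have hb' : b = 1 - a := by linarith
    calc (a • x + b • y).1 = a * x.1 + (1 - a) * y.1 := by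
          simp [Prod.smul_def, hb']
      _ ≤ a * EC (θ₁ * T * B) rp.1 + (1 - a) * EC (θ₁ * T * B) rq.1 := by
          have : (0:ℝ) ≤ 1 - a := by linarith
          gcongr
      _ ≤ _ := this
  · have hkey := log_integral_exp_le hc₂ hm2 hm2' h02 h02' hM2 hM2' ha0 ha1
    have : a * EC (θ₂ * T * B) rp.2 + (1 - a) * EC (θ₂ * T * B) rq.2
        ≤ EC (θ₂ * T * B) fun ω => a * rp.2 ω + (1 - a) * rq.2 ω := by
      simp only [hEC]
      have h1c : 0 ≤ 1 / (θ₂ * T * B) := by positivity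
      nlinarith [hkey]
    have hb' : b = 1 - a := by linarith
    calc (a • x + b • y).2 = a * x.2 + (1 - a) * y.2 := by
          simp [Prod.smul_def, hb']
      _ ≤ a * EC (θ₂ * T * B) rp.2 + (1 - a) * EC (θ₂ * T * B) rq.2 := by
          have : (0:ℝ) ≤ 1 - a := by linarith
          gcongr
      _ ≤ _ := this
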